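/- Let R be an integral domain, p ∈ R a prime element, and (K,w) a WSC with w: K → R. The short exact sequence 0 → R →(×p) R → R/pR → 0 induces a long exact sequence of weighted homology ⋯ → H_n(K,w;R) →(×p) H_n(K,w;R) → H_n(K,w;R/pR) →∂ H_{n-1}(K,w;R) → ⋯, and the generalized Bockstein β = ρ_* ∘ ∂: H_n(K,w;R/pR) → H_{n-1}(K,w;R/pR) satisfies β ∘ β = 0. -/

import Mathlib

open Finset

/-- An abstract simplicial complex on a vertex type `V`. -/
structure SComplex (V : Type*) where
  faces : Set (Finset V)
  not_empty_mem : ∅ ∉ faces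
  down_closed : ∀ {s t : Finset V}, s ∈ faces → t ⊆ s → t.Nonempty → t ∈ faces

/-- The `n`-dimensional simplices (cardinality `n+1`) of a complex. -/
def SComplex.SimplexOf {V : Type*} (K : SComplex V) (n : ℕ) : Type _ :=
  {s : Finset V // s ∈ K.faces ∧ s.card = n + 1}

/-- The `i`-th face of an `(n+1)`-dimensional simplex: delete its `i`-th vertex
(vertices listed in increasing order). -/
noncomputable def SComplex.face {V : Type*} [LinearOrder V] (K : SComplex V) {n : ℕ}
    (σ : K.SimplexOf (n + 1)) (i : Fin (n + 2)) : K.SimplexOf n := by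
  classical
  refine ⟨σ.1.erase (σ.1.orderEmbOfFin σ.2.2 i),
    K.down_closed σ.2.1 (Finset.erase_subset _ _) ?_, ?_⟩
  · rw [← Finset.card_pos, Finset.card_erase_of_mem (Finset.orderEmbOfFin_mem _ _ _), σ.2.2]
    omega
  · simp [Finset.card_erase_of_mem (Finset.orderEmbOfFin_mem _ _ _), σ.2.2]

/-- The quotient `b / a` in a commutative ring, for `a ∣ b` (an arbitrary choice of
quotient; it is unique when the ring is an integral domain and `a ≠ 0`). -/
noncomputable def dquot {R : Type*} [CommRing R] (b a : R) : R :=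
  open Classical in if h : a ∣ b then h.choose else 0

/-- The weighted boundary map `∂ₙ : Cₙ₊₁ → Cₙ` of a weighted simplicial complex `(K, w)`,
`∂ₙ σ = Σᵢ (w σ / w (dᵢ σ)) (-1)ⁱ dᵢ σ`, with coefficients pushed forward along a ring
homomorphism `g : R →+* S` (take `g = RingHom.id R` for coefficients in `R` itself). -/
noncomputable def wbnd {V R S : Type*} [LinearOrder V] [CommRing R] [CommRing S]
    (g : R →+* S) (K : SComplex V) (w : Finset V → R) (n : ℕ) :
    (K.SimplexOf (n + 1) →₀ S) →ₗ[S] (K.SimplexOf n →₀ S) :=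
  Finsupp.lsum S fun σ => LinearMap.toSpanSingleton S _
    (∑ i : Fin (n + 2),
      ((-1 : S) ^ (i : ℕ) * g (dquot (w σ.1) (w (K.face σ i).1))) •
        Finsupp.single (K.face σ i) (1 : S))

/-- The weighted cycles in degree `n` (in degree `0` every chain is a cycle). -/
noncomputable def wZ {V R S : Type*} [LinearOrder V] [CommRing R] [CommRing S]
    (g : R →+* S) (K : SComplex V) (w : Finset V → R) :
    (n : ℕ) → Submodule S (K.SimplexOf n →₀ S)
  | 0 => ⊤
  | n + 1 => LinearMap.ker (wbnd g K w n)

/-- The weighted homology `Hₙ(K, w) = ker ∂ₙ / im ∂ₙ₊₁` with coefficients in `S`. -/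
noncomputable abbrev wH {V R S : Type*} [LinearOrder V] [CommRing R] [CommRing S]
    (g : R →+* S) (K : SComplex V) (w : Finset V → R) (n : ℕ) :=
  letI : AddCommGroup ↥(wZ g K w n) := inferInstance
  wZ g K w n ⧸ Submodule.comap (wZ g K w n).subtype (LinearMap.range (wbnd g K w n))

/-- Coefficient reduction on chains along an additive map of coefficient rings. -/
noncomputable def chMap {V : Type*} {S T : Type*} [CommRing S] [CommRing T]
    (K : SComplex V) (g : S →+ T) (n : ℕ) :
    (K.SimplexOf n →₀ S) →+ (K.SimplexOf n →₀ T) :=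
  Finsupp.mapRange.addMonoidHom g

section DQuot
variable {R : Type*} [CommRing R]

lemma dquot_spec {a b : R} (h : a ∣ b) : a * dquot b a = b := by
  rw [dquot, dif_pos h]; exact h.choose_spec.symm

variable [IsDomain R]

lemma dquot_zero {a : R} (ha : a ≠ 0) : dquot 0 a = 0 := by
  have := dquot_spec (dvd_zero a)
  exact (mul_eq_zero.1 this).resolve_left ha

lemma dquot_mul {a b c : R} (ha : a ≠ 0) (hab : a ∣ b) (hbc : b ∣ c) :
    dquot c b * dquot b a = dquot c a := by
  apply mul_left_cancel₀ ha
  rw [dquot_spec (hab.trans hbc), ← mul_assoc, mul_comm a (dquot c b), mul_assoc,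
    dquot_spec hab]
  rw [mul_comm, dquot_spec hbc]

end DQuot

section Face
variable {V : Type*} [LinearOrder V]

lemma val_succAbove {n : ℕ} (p : Fin (n + 1)) (m : Fin n) :
    ((p.succAbove m : Fin (n + 1)) : ℕ) = if (m : ℕ) < (p : ℕ) then (m : ℕ) else (m : ℕ) + 1 := by
  rw [Fin.succAbove]
  rcases lt_or_ge (Fin.castSucc m) p with h | h
  · rw [if_pos h, if_pos (by simpa [Fin.lt_def] using h)]; simp
  · rw [if_neg (not_lt.2 h), if_neg (by rw [not_lt]; exact h)]; simp

lemma orderEmbOfFin_erase {s : Finset V} {m : ℕ} (h : s.card = m + 2) (i : Fin (m + 2))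
    (h' : (s.erase (s.orderEmbOfFin h i)).card = m + 1) (j : Fin (m + 1)) :
    (s.erase (s.orderEmbOfFin h i)).orderEmbOfFin h' j = s.orderEmbOfFin h (i.succAbove j) := by
  have key := Finset.orderEmbOfFin_unique h'
    (f := fun j : Fin (m + 1) => s.orderEmbOfFin h (i.succAbove j)) ?_ ?_
  · exact (congrFun key j).symm
  · intro x
    refine Finset.mem_erase.2 ⟨fun hc => ?_, Finset.orderEmbOfFin_mem _ _ _⟩
    exact Fin.succAbove_ne i x ((s.orderEmbOfFin h).injective hc)
  · exact (s.orderEmbOfFin h).strictMono.comp (Fin.strictMono_succAbove i)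

lemma face_coe (K : SComplex V) {n : ℕ} (σ : K.SimplexOf (n + 1)) (i : Fin (n + 2)) :
    (K.face σ i).1 = σ.1.erase (σ.1.orderEmbOfFin σ.2.2 i) := rfl

lemma face_face_coe (K : SComplex V) {n : ℕ} (σ : K.SimplexOf (n + 2)) (i : Fin (n + 3))
    (j : Fin (n + 2)) :
    (K.face (K.face σ i) j).1 =
      (σ.1.erase (σ.1.orderEmbOfFin σ.2.2 i)).erase (σ.1.orderEmbOfFin σ.2.2 (i.succAbove j)) :=
  congrArg ((σ.1.erase (σ.1.orderEmbOfFin σ.2.2 i)).erase ·)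
    (orderEmbOfFin_erase σ.2.2 i (K.face σ i).2.2 j)

end Face

section Bnd
variable {V R S : Type*} [LinearOrder V] [CommRing R] [CommRing S]

lemma wbnd_single (g : R →+* S) (K : SComplex V) (w : Finset V → R) (n : ℕ)
    (σ : K.SimplexOf (n + 1)) (b : S) :
    wbnd g K w n (Finsupp.single σ b) =
      ∑ i : Fin (n + 2), Finsupp.single (K.face σ i)
        (b * ((-1 : S) ^ (i : ℕ) * g (dquot (w σ.1) (w (K.face σ i).1)))) := by
  rw [wbnd, Finsupp.lsum_single, LinearMap.toSpanSingleton_apply, Finset.smul_sum]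
  refine Finset.sum_congr rfl fun i _ => ?_
  rw [smul_smul, Finsupp.smul_single, smul_eq_mul, mul_one]
end Bnd

section BndBnd

lemma neg_one_pow_sum {S : Type*} [Ring S] (a b : ℕ) (h : (a + b) % 2 = 1) :
    (-1 : S) ^ a + (-1) ^ b = 0 := by
  rcases Nat.even_or_odd a with ha | ha
  · have hb : Odd b := Nat.odd_iff.2 (by have := Nat.even_iff.1 ha; omega)
    rw [ha.neg_one_pow, hb.neg_one_pow, add_neg_cancel]
  · have hb : Even b := Nat.even_iff.2 (by have := Nat.odd_iff.1 ha; omega)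
    rw [ha.neg_one_pow, hb.neg_one_pow, neg_add_cancel]

/-- The involution on pairs of face indices used to prove `∂ ∘ ∂ = 0`. -/
def binv {n : ℕ} : Fin (n + 3) × Fin (n + 2) → Fin (n + 3) × Fin (n + 2)
  | (i, j) =>
    if h : (j : ℕ) < (i : ℕ) then
      (⟨(j : ℕ), by have := j.isLt; omega⟩, ⟨(i : ℕ) - 1, by have := i.isLt; omega⟩)
    else
      (⟨(j : ℕ) + 1, by have := j.isLt; omega⟩, ⟨(i : ℕ), by have := j.isLt; omega⟩)

lemma binv_eq_pos {n : ℕ} (i : Fin (n + 3)) (j : Fin (n + 2)) (h : (j : ℕ) < (i : ℕ)) :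
    binv (i, j) = (⟨(j : ℕ), by have := j.isLt; omega⟩, ⟨(i : ℕ) - 1, by have := i.isLt; omega⟩) := by
  rw [binv, dif_pos h]

lemma binv_eq_neg {n : ℕ} (i : Fin (n + 3)) (j : Fin (n + 2)) (h : ¬ (j : ℕ) < (i : ℕ)) :
    binv (i, j) = (⟨(j : ℕ) + 1, by have := j.isLt; omega⟩, ⟨(i : ℕ), by have := j.isLt; omega⟩) := by
  rw [binv, dif_neg h]

lemma binv_binv {n : ℕ} (x : Fin (n + 3) × Fin (n + 2)) : binv (binv x) = x := by
  obtain ⟨i, j⟩ := x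
  by_cases h : (j : ℕ) < (i : ℕ)
  · rw [binv_eq_pos i j h, binv_eq_neg _ _ (by simp; omega), Prod.mk.injEq]
    constructor <;> (apply Fin.ext; simp; try omega)
  · rw [binv_eq_neg i j h, binv_eq_pos _ _ (by simp; omega), Prod.mk.injEq]
    constructor <;> (apply Fin.ext; simp; try omega)

lemma binv_ne {n : ℕ} (x : Fin (n + 3) × Fin (n + 2)) : binv x ≠ x := by
  obtain ⟨i, j⟩ := x
  intro hc
  by_cases h : (j : ℕ) < (i : ℕ)
  · rw [binv_eq_pos i j h, Prod.mk.injEq] at hc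
    have := congrArg Fin.val hc.1
    simp at this; omega
  · rw [binv_eq_neg i j h, Prod.mk.injEq] at hc
    have := congrArg Fin.val hc.1
    simp at this; omega

lemma binv_spec1 {n : ℕ} (x : Fin (n + 3) × Fin (n + 2)) :
    x.1.succAbove x.2 = (binv x).1 := by
  obtain ⟨i, j⟩ := x
  apply Fin.ext
  rw [val_succAbove]
  by_cases h : (j : ℕ) < (i : ℕ)
  · rw [binv_eq_pos i j h, if_pos h]
  · rw [binv_eq_neg i j h, if_neg h]

lemma binv_spec2 {n : ℕ} (x : Fin (n + 3) × Fin (n + 2)) :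
    (binv x).1.succAbove (binv x).2 = x.1 := by
  obtain ⟨i, j⟩ := x
  apply Fin.ext
  by_cases h : (j : ℕ) < (i : ℕ)
  · rw [binv_eq_pos i j h, val_succAbove]
    simp only [if_neg (show ¬ ((i : ℕ) - 1 < (j : ℕ)) by simp; omega)]
    show (i : ℕ) - 1 + 1 = (i : ℕ)
    omega
  · rw [binv_eq_neg i j h, val_succAbove]
    simp only [if_pos (show (i : ℕ) < (j : ℕ) + 1 by omega)]

lemma binv_parity {n : ℕ} (x : Fin (n + 3) × Fin (n + 2)) :
    (((x.1 : ℕ) + (x.2 : ℕ)) + (((binv x).1 : ℕ) + ((binv x).2 : ℕ))) % 2 = 1 := by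
  obtain ⟨i, j⟩ := x
  by_cases h : (j : ℕ) < (i : ℕ)
  · rw [binv_eq_pos i j h]; simp; omega
  · rw [binv_eq_neg i j h]; simp; omega

end BndBnd

section DD
variable {V R S : Type*} [LinearOrder V] [CommRing R] [CommRing S]

lemma face_binv (K : SComplex V) {n : ℕ} (σ : K.SimplexOf (n + 2))
    (x : Fin (n + 3) × Fin (n + 2)) :
    K.face (K.face σ x.1) x.2 = K.face (K.face σ (binv x).1) (binv x).2 := by
  apply Subtype.ext
  rw [face_face_coe, face_face_coe, binv_spec1 x, binv_spec2 x]
  exact Finset.erase_right_comm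

variable [IsDomain R]

lemma wbnd_wbnd (g : R →+* S) (K : SComplex V) (w : Finset V → R)
    (hw0 : ∀ s ∈ K.faces, w s ≠ 0)
    (hdvd : ∀ {s t : Finset V}, s ∈ K.faces → t ∈ K.faces → t ⊆ s → w t ∣ w s)
    (n : ℕ) (c : K.SimplexOf (n + 2) →₀ S) :
    wbnd g K w n (wbnd g K w (n + 1) c) = 0 := by
  induction c using Finsupp.induction_linear with
  | zero => simp
  | add f f' hf hf' => rw [map_add, map_add, hf, hf', add_zero]
  | single σ b =>
    rw [wbnd_single, map_sum]
    simp only [wbnd_single]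
    rw [← Fintype.sum_prod_type']
    refine Finset.sum_ninvolution binv ?_ (fun x _ => binv_ne x) (fun x => Finset.mem_univ _)
      binv_binv
    intro x
    have hmul : ∀ (i : Fin (n + 3)) (j : Fin (n + 2)),
        g (dquot (w σ.1) (w (K.face σ i).1)) *
          g (dquot (w (K.face σ i).1) (w (K.face (K.face σ i) j).1)) =
        g (dquot (w σ.1) (w (K.face (K.face σ i) j).1)) := by
      intro i j
      rw [← map_mul]
      congr 1
      exact dquot_mul (hw0 _ (K.face (K.face σ i) j).2.1)
        (hdvd (K.face σ i).2.1 (K.face (K.face σ i) j).2.1 (Finset.erase_subset _ _))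
        (hdvd σ.2.1 (K.face σ i).2.1 (Finset.erase_subset _ _))
    have hx := hmul x.1 x.2
    have hy := hmul (binv x).1 (binv x).2
    rw [← face_binv K σ x] at hy
    rw [← face_binv K σ x]
    rw [show ∀ (a b' : ℕ) (u v : S),
        (b * ((-1 : S) ^ a * u)) * ((-1 : S) ^ b' * v) = (-1 : S) ^ (a + b') * (b * (u * v))
      from fun _ _ _ _ => by ring,
      show ∀ (a b' : ℕ) (u v : S),
        (b * ((-1 : S) ^ a * u)) * ((-1 : S) ^ b' * v) = (-1 : S) ^ (a + b') * (b * (u * v))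
      from fun _ _ _ _ => by ring]
    rw [hx, hy, ← Finsupp.single_add, ← add_mul, neg_one_pow_sum _ _ (binv_parity x), zero_mul,
      Finsupp.single_zero]

end DD

section MapRange
variable {V R S : Type*} [LinearOrder V] [CommRing R] [CommRing S]

lemma mapRange_wbnd (g : R →+* S) (K : SComplex V) (w : Finset V → R) (n : ℕ)
    (c : K.SimplexOf (n + 1) →₀ R) :
    Finsupp.mapRange g (map_zero g) (wbnd (RingHom.id R) K w n c) =
      wbnd g K w n (Finsupp.mapRange g (map_zero g) c) := by
  induction c using Finsupp.induction_linear with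
  | zero => simp
  | add f f' hf hf' =>
    rw [map_add, Finsupp.mapRange_add (map_add g), Finsupp.mapRange_add (map_add g), map_add,
      hf, hf']
  | single σ b =>
    rw [Finsupp.mapRange_single, wbnd_single, wbnd_single,
      Finsupp.mapRange_finset_sum g]
    refine Finset.sum_congr rfl fun i _ => ?_
    show Finsupp.mapRange g (map_zero g) _ = _
    rw [Finsupp.mapRange_single]
    congr 1
    rw [map_mul, map_mul, map_pow, map_neg, map_one, RingHom.id_apply]

end MapRange

set_option linter.unusedSectionVars false

section Bockstein

variable {V R : Type*} [LinearOrder V] [CommRing R] [IsDomain R]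

/-- Reduction of chains mod `p`. -/
noncomputable def redc (p : R) (K : SComplex V) (n : ℕ) (c : K.SimplexOf n →₀ R) :
    K.SimplexOf n →₀ R ⧸ Ideal.span ({p} : Set R) :=
  Finsupp.mapRange (Ideal.Quotient.mk (Ideal.span ({p} : Set R))) (map_zero _) c

/-- Division of a chain by `p`. -/
noncomputable def pdiv {p : R} (hp : Prime p) (K : SComplex V) (n : ℕ)
    (c : K.SimplexOf n →₀ R) : K.SimplexOf n →₀ R :=
  Finsupp.mapRange (fun x => dquot x p) (dquot_zero hp.ne_zero) c

lemma redc_add {p : R} {K : SComplex V} (n : ℕ) (c d : K.SimplexOf n →₀ R) :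
    redc p K n (c + d) = redc p K n c + redc p K n d :=
  Finsupp.mapRange_add (map_add _) c d

lemma redc_sub {p : R} {K : SComplex V} (n : ℕ) (c d : K.SimplexOf n →₀ R) :
    redc p K n (c - d) = redc p K n c - redc p K n d :=
  Finsupp.mapRange_sub (map_sub _) c d

lemma pdiv_spec {p : R} (hp : Prime p) {K : SComplex V} {n : ℕ} {c : K.SimplexOf n →₀ R}
    (h : redc p K n c = 0) : p • pdiv hp K n c = c := by
  ext τ
  have hτ : Ideal.Quotient.mk (Ideal.span ({p} : Set R)) (c τ) = 0 := by
    have := Finsupp.ext_iff.1 h τ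
    rwa [redc, Finsupp.mapRange_apply] at this
  have hd : p ∣ c τ :=
    Ideal.mem_span_singleton.1 (Ideal.Quotient.eq_zero_iff_mem.1 hτ)
  rw [Finsupp.smul_apply, pdiv, Finsupp.mapRange_apply, smul_eq_mul, dquot_spec hd]

lemma redc_p_smul {p : R} {K : SComplex V} (n : ℕ) (c : K.SimplexOf n →₀ R) :
    redc p K n (p • c) = 0 := by
  ext τ
  rw [redc, Finsupp.mapRange_apply, Finsupp.smul_apply, smul_eq_mul]
  exact Ideal.Quotient.eq_zero_iff_mem.2
    (Ideal.mul_mem_right _ _ (Ideal.mem_span_singleton_self p))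

lemma redc_surjective (p : R) (K : SComplex V) (n : ℕ) : Function.Surjective (redc p K n) := by
  intro u
  induction u using Finsupp.induction_linear with
  | zero => exact ⟨0, by ext τ; simp [redc]⟩
  | add f f' hf hf' =>
    obtain ⟨c, hc⟩ := hf; obtain ⟨d, hd⟩ := hf'
    exact ⟨c + d, by rw [redc_add, hc, hd]⟩
  | single τ b =>
    obtain ⟨r, hr⟩ := Ideal.Quotient.mk_surjective b
    exact ⟨Finsupp.single τ r, by rw [redc, Finsupp.mapRange_single, hr]⟩

lemma psmul_cancel {p : R} (hp : Prime p) {α : Type*} {a b : α →₀ R} (h : p • a = p • b) :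
    a = b := by
  ext x
  have := Finsupp.ext_iff.1 h x
  rw [Finsupp.smul_apply, Finsupp.smul_apply, smul_eq_mul, smul_eq_mul] at this
  exact mul_left_cancel₀ hp.ne_zero this

lemma redc_wbnd (p : R) {K : SComplex V} (w : Finset V → R) (n : ℕ)
    (c : K.SimplexOf (n + 1) →₀ R) :
    redc p K n (wbnd (RingHom.id R) K w n c) =
      wbnd (Ideal.Quotient.mk (Ideal.span ({p} : Set R))) K w n (redc p K (n + 1) c) :=
  mapRange_wbnd _ K w n c

variable {K : SComplex V} {w : Finset V → R}
  (hw0 : ∀ s ∈ K.faces, w s ≠ 0)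
  (hdvd : ∀ {s t : Finset V}, s ∈ K.faces → t ∈ K.faces → t ⊆ s → w t ∣ w s)

include hw0 hdvd in
lemma bnd_mem_wZ {S : Type*} [CommRing S] (g : R →+* S) (n : ℕ)
    (c : K.SimplexOf (n + 1) →₀ S) : wbnd g K w n c ∈ wZ g K w n := by
  cases n with
  | zero => exact Submodule.mem_top
  | succ m => exact LinearMap.mem_ker.2 (wbnd_wbnd g K w hw0 hdvd m c)

include hw0 hdvd in
lemma mem_wZ_of_p_smul {p : R} (hp : Prime p) {n : ℕ} {a : K.SimplexOf n →₀ R}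
    {c : K.SimplexOf (n + 1) →₀ R}
    (h : wbnd (RingHom.id R) K w n c = p • a) : a ∈ wZ (RingHom.id R) K w n := by
  cases n with
  | zero => exact Submodule.mem_top
  | succ m =>
    refine LinearMap.mem_ker.2 (psmul_cancel hp ?_)
    rw [smul_zero, ← map_smul, ← h, wbnd_wbnd (RingHom.id R) K w hw0 hdvd m c]

include hw0 hdvd in
lemma mem_wZ_of_p_smul_mem {p : R} (hp : Prime p) {n : ℕ} {d e : K.SimplexOf n →₀ R}
    (he : e ∈ wZ (RingHom.id R) K w n) {c : K.SimplexOf (n + 1) →₀ R}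
    (h : p • d = e - wbnd (RingHom.id R) K w n c) : d ∈ wZ (RingHom.id R) K w n := by
  cases n with
  | zero => exact Submodule.mem_top
  | succ m =>
    refine LinearMap.mem_ker.2 (psmul_cancel hp ?_)
    rw [smul_zero, ← map_smul, h, map_sub, LinearMap.mem_ker.1 he,
      wbnd_wbnd (RingHom.id R) K w hw0 hdvd m c, sub_zero]

lemma redc_mem_wZ (p : R) {n : ℕ} {z : K.SimplexOf n →₀ R}
    (hz : z ∈ wZ (RingHom.id R) K w n) :
    redc p K n z ∈ wZ (Ideal.Quotient.mk (Ideal.span ({p} : Set R))) K w n := by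
  cases n with
  | zero => exact Submodule.mem_top
  | succ m =>
    refine LinearMap.mem_ker.2 ?_
    rw [← redc_wbnd p w m z, LinearMap.mem_ker.1 hz]
    ext τ; simp [redc]

end Bockstein

section Maps

variable {V R : Type*} [LinearOrder V] [CommRing R] [IsDomain R]
  {p : R} {K : SComplex V} {w : Finset V → R}

lemma mu_le (p : R) (K : SComplex V) (w : Finset V → R) (n : ℕ) :
    Submodule.comap (wZ (RingHom.id R) K w n).subtype
        (LinearMap.range (wbnd (RingHom.id R) K w n)) ≤
      Submodule.comap
        (p • (LinearMap.id : ↥(wZ (RingHom.id R) K w n) →ₗ[R] ↥(wZ (RingHom.id R) K w n)))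
        (Submodule.comap (wZ (RingHom.id R) K w n).subtype
          (LinearMap.range (wbnd (RingHom.id R) K w n))) := by
  intro x hx
  simp only [Submodule.mem_comap, LinearMap.smul_apply, LinearMap.id_apply,
    Submodule.subtype_apply, SetLike.val_smul] at hx ⊢
  exact Submodule.smul_mem _ p hx

/-- Multiplication by `p` on weighted homology. -/
noncomputable def muHom (p : R) (K : SComplex V) (w : Finset V → R) (n : ℕ) :
    wH (RingHom.id R) K w n →+ wH (RingHom.id R) K w n :=
  (Submodule.mapQ _ _
    (p • (LinearMap.id : ↥(wZ (RingHom.id R) K w n) →ₗ[R] ↥(wZ (RingHom.id R) K w n)))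
    (mu_le p K w n)).toAddMonoidHom

lemma muHom_mk (n : ℕ) (z : ↥(wZ (RingHom.id R) K w n)) :
    muHom p K w n (Submodule.Quotient.mk z) = Submodule.Quotient.mk (p • z) := by
  simp only [muHom, LinearMap.toAddMonoidHom_coe]
  rw [Submodule.mapQ_apply]
  rfl

/-- Reduction mod `p` on cycles, valued in mod-`p` homology. -/
noncomputable def rhoZ (p : R) (K : SComplex V) (w : Finset V → R) (n : ℕ) :
    ↥(wZ (RingHom.id R) K w n) →+
      wH (Ideal.Quotient.mk (Ideal.span ({p} : Set R))) K w n :=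
  AddMonoidHom.mk'
    (fun z => Submodule.Quotient.mk
      (⟨redc p K n z.1, redc_mem_wZ p z.2⟩ :
        ↥(wZ (Ideal.Quotient.mk (Ideal.span ({p} : Set R))) K w n)))
    (by
      intro a b
      rw [← Submodule.Quotient.mk_add]
      exact congrArg Submodule.Quotient.mk (Subtype.ext (redc_add (p := p) n a.1 b.1)))

/-- Reduction mod `p` on weighted homology. -/
noncomputable def rhoHom (p : R) (K : SComplex V) (w : Finset V → R) (n : ℕ) :
    wH (RingHom.id R) K w n →+
      wH (Ideal.Quotient.mk (Ideal.span ({p} : Set R))) K w n :=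
  QuotientAddGroup.lift _ (rhoZ p K w n) (by
    intro z hz
    rw [Submodule.mem_toAddSubgroup, Submodule.mem_comap] at hz
    obtain ⟨c, hc⟩ := hz
    show Submodule.Quotient.mk _ = 0
    rw [Submodule.Quotient.mk_eq_zero, Submodule.mem_comap]
    refine ⟨redc p K (n + 1) c, ?_⟩
    show wbnd _ K w n (redc p K (n + 1) c) = redc p K n z.1
    rw [← redc_wbnd p w n c]
    exact congrArg (redc p K n) hc)

lemma rhoHom_mk (n : ℕ) (z : ↥(wZ (RingHom.id R) K w n)) :
    rhoHom p K w n (Submodule.Quotient.mk z) =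
      Submodule.Quotient.mk
        (⟨redc p K n z.1, redc_mem_wZ p z.2⟩ :
          ↥(wZ (Ideal.Quotient.mk (Ideal.span ({p} : Set R))) K w n)) := rfl

variable (hp : Prime p)
  (hw0 : ∀ s ∈ K.faces, w s ≠ 0)
  (hdvd : ∀ {s t : Finset V}, s ∈ K.faces → t ∈ K.faces → t ⊆ s → w t ∣ w s)

include hp hw0 hdvd in
lemma delta_exists (n : ℕ)
    (z : ↥(wZ (Ideal.Quotient.mk (Ideal.span ({p} : Set R))) K w (n + 1))) :
    ∃ ca : (K.SimplexOf (n + 1) →₀ R) × ↥(wZ (RingHom.id R) K w n),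
      redc p K (n + 1) ca.1 = z.1 ∧
        wbnd (RingHom.id R) K w n ca.1 = p • ca.2.1 := by
  obtain ⟨c, hc⟩ := redc_surjective p K (n + 1) z.1
  have hz : wbnd (Ideal.Quotient.mk (Ideal.span ({p} : Set R))) K w n z.1 = 0 :=
    LinearMap.mem_ker.1 z.2
  have h0 : redc p K n (wbnd (RingHom.id R) K w n c) = 0 := by
    rw [redc_wbnd p w n c, hc, hz]
  have hps : p • pdiv hp K n (wbnd (RingHom.id R) K w n c) = wbnd (RingHom.id R) K w n c :=
    pdiv_spec hp h0
  exact ⟨(c, ⟨pdiv hp K n (wbnd (RingHom.id R) K w n c),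
    mem_wZ_of_p_smul hw0 hdvd hp hps.symm⟩), hc, hps.symm⟩

include hp hw0 hdvd in
lemma delta_wd (n : ℕ)
    (z₁ z₂ : ↥(wZ (Ideal.Quotient.mk (Ideal.span ({p} : Set R))) K w (n + 1)))
    (c₁ c₂ : K.SimplexOf (n + 1) →₀ R) (a₁ a₂ : ↥(wZ (RingHom.id R) K w n))
    (h1 : redc p K (n + 1) c₁ = z₁.1) (h2 : redc p K (n + 1) c₂ = z₂.1)
    (e1 : wbnd (RingHom.id R) K w n c₁ = p • a₁.1)
    (e2 : wbnd (RingHom.id R) K w n c₂ = p • a₂.1)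
    (hz : z₁ - z₂ ∈ Submodule.comap
      (wZ (Ideal.Quotient.mk (Ideal.span ({p} : Set R))) K w (n + 1)).subtype
      (LinearMap.range (wbnd (Ideal.Quotient.mk (Ideal.span ({p} : Set R))) K w (n + 1)))) :
    (Submodule.Quotient.mk a₁ : wH (RingHom.id R) K w n) = Submodule.Quotient.mk a₂ := by
  rw [Submodule.mem_comap] at hz
  obtain ⟨u, hu⟩ := hz
  obtain ⟨v, hv⟩ := redc_surjective p K (n + 2) u
  set e := c₁ - c₂ - wbnd (RingHom.id R) K w (n + 1) v with he_def
  have he : redc p K (n + 1) e = 0 := by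
    rw [he_def, redc_sub, redc_sub, redc_wbnd p w (n + 1) v, hv, h1, h2, hu]
    simp
  have hpe : p • pdiv hp K (n + 1) e = e := pdiv_spec hp he
  have hbnd : wbnd (RingHom.id R) K w n e = p • (a₁.1 - a₂.1) := by
    rw [he_def, map_sub, map_sub, e1, e2, wbnd_wbnd (RingHom.id R) K w hw0 hdvd n v,
      sub_zero, smul_sub]
  have h3 : p • wbnd (RingHom.id R) K w n (pdiv hp K (n + 1) e) = p • (a₁.1 - a₂.1) := by
    rw [← map_smul, hpe, hbnd]
  have h4 := psmul_cancel hp h3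
  rw [Submodule.Quotient.eq, Submodule.mem_comap]
  exact ⟨pdiv hp K (n + 1) e, by rw [h4]; rfl⟩

/-- The connecting-homomorphism on the level of mod-`p` cycles. -/
noncomputable def deltaFun (n : ℕ)
    (z : ↥(wZ (Ideal.Quotient.mk (Ideal.span ({p} : Set R))) K w (n + 1))) :
    wH (RingHom.id R) K w n :=
  Submodule.Quotient.mk (delta_exists hp hw0 hdvd n z).choose.2

include hp hw0 hdvd in
lemma deltaFun_spec (n : ℕ)
    (z : ↥(wZ (Ideal.Quotient.mk (Ideal.span ({p} : Set R))) K w (n + 1)))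
    (c : K.SimplexOf (n + 1) →₀ R) (a : ↥(wZ (RingHom.id R) K w n))
    (h1 : redc p K (n + 1) c = z.1)
    (h2 : wbnd (RingHom.id R) K w n c = p • a.1) :
    deltaFun hp hw0 hdvd n z = Submodule.Quotient.mk a := by
  have spec := (delta_exists hp hw0 hdvd n z).choose_spec
  exact delta_wd hp hw0 hdvd n z z _ c _ a spec.1 h1 spec.2 h2
    (by convert (Submodule.zero_mem _) using 1; exact sub_self z)

include hp hw0 hdvd in
lemma deltaFun_add (n : ℕ)
    (z₁ z₂ : ↥(wZ (Ideal.Quotient.mk (Ideal.span ({p} : Set R))) K w (n + 1))) :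
    deltaFun hp hw0 hdvd n (z₁ + z₂) =
      deltaFun hp hw0 hdvd n z₁ + deltaFun hp hw0 hdvd n z₂ := by
  have s1 := (delta_exists hp hw0 hdvd n z₁).choose_spec
  have s2 := (delta_exists hp hw0 hdvd n z₂).choose_spec
  have key := deltaFun_spec hp hw0 hdvd n (z₁ + z₂)
    ((delta_exists hp hw0 hdvd n z₁).choose.1 + (delta_exists hp hw0 hdvd n z₂).choose.1)
    ((delta_exists hp hw0 hdvd n z₁).choose.2 + (delta_exists hp hw0 hdvd n z₂).choose.2)
    (by rw [redc_add, s1.1, s2.1]; rfl)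
    (by rw [map_add, s1.2, s2.2, ← smul_add]; rfl)
  rw [key, deltaFun, deltaFun, ← Submodule.Quotient.mk_add]

/-- The connecting homomorphism on weighted homology. -/
noncomputable def deltaHom (n : ℕ) :
    wH (Ideal.Quotient.mk (Ideal.span ({p} : Set R))) K w (n + 1) →+
      wH (RingHom.id R) K w n :=
  QuotientAddGroup.lift _
    (AddMonoidHom.mk' (deltaFun hp hw0 hdvd n) (deltaFun_add hp hw0 hdvd n)) (by
    intro z hz
    rw [Submodule.mem_toAddSubgroup] at hz
    show deltaFun hp hw0 hdvd n z = 0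
    have spec := (delta_exists hp hw0 hdvd n z).choose_spec
    have := delta_wd hp hw0 hdvd n z 0 _ 0 _ 0 spec.1 (by simp [redc]) spec.2
      (by simp) (by simpa using hz)
    rw [deltaFun, this, Submodule.Quotient.mk_zero]
    )

end Maps

set_option maxHeartbeats 1000000 in
/-- Let `R` be an integral domain, `p ∈ R` a prime element, and
`(K, w)` a weighted simplicial complex with weights in `R`.  The short exact sequence
`0 → R →(×p) R → R/pR → 0` induces a long exact sequence of weighted homology
`⋯ → Hₙ(K,w;R) →(×p) Hₙ(K,w;R) →ρ Hₙ(K,w;R/pR) →∂ H_{n-1}(K,w;R) → ⋯`, and the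
generalized Bockstein homomorphism `β = ρ_* ∘ ∂` satisfies `β ∘ β = 0`. -/
theorem generalized_bockstein_les_and_bockstein_squared_zero
    {V R : Type*} [LinearOrder V] [CommRing R] [IsDomain R]
    (p : R) (hp : Prime p)
    (K : SComplex V) (w : Finset V → R)
    (hw0 : ∀ s ∈ K.faces, w s ≠ 0)
    (hdvd : ∀ {s t : Finset V}, s ∈ K.faces → t ∈ K.faces → t ⊆ s → w t ∣ w s) :
    ∃ (μ : ∀ n, wH (RingHom.id R) K w n →+ wH (RingHom.id R) K w n)
      (ρ : ∀ n, wH (RingHom.id R) K w n →+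
        wH (Ideal.Quotient.mk (Ideal.span ({p} : Set R))) K w n)
      (δ : ∀ n, wH (Ideal.Quotient.mk (Ideal.span ({p} : Set R))) K w (n + 1) →+
        wH (RingHom.id R) K w n),
      -- `μ` is induced by multiplication by `p` on chains
      (∀ n (z : wZ (RingHom.id R) K w n),
        μ n (Submodule.Quotient.mk z) = Submodule.Quotient.mk (p • z))
      -- `ρ` is induced by reduction of coefficients mod `p`
      ∧ (∀ n (z : wZ (RingHom.id R) K w n),
        ∃ hz : chMap K (AddMonoidHom.mk' (Ideal.Quotient.mk (Ideal.span ({p} : Set R)))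
              (map_add _)) n z.1 ∈
            wZ (Ideal.Quotient.mk (Ideal.span ({p} : Set R))) K w n,
          ρ n (Submodule.Quotient.mk z) =
            Submodule.Quotient.mk
              (⟨_, hz⟩ : wZ (Ideal.Quotient.mk (Ideal.span ({p} : Set R))) K w n))
      -- `δ` is the connecting homomorphism: `δ [c ⊗ 1] = [a]` whenever `∂ c = p • a`
      ∧ (∀ n (c : K.SimplexOf (n + 1) →₀ R)
          (hc : chMap K (AddMonoidHom.mk' (Ideal.Quotient.mk (Ideal.span ({p} : Set R)))
              (map_add _)) (n + 1) c ∈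
            wZ (Ideal.Quotient.mk (Ideal.span ({p} : Set R))) K w (n + 1))
          (a : wZ (RingHom.id R) K w n),
          wbnd (RingHom.id R) K w n c = p • a.1 →
          δ n (Submodule.Quotient.mk
              (⟨_, hc⟩ : wZ (Ideal.Quotient.mk (Ideal.span ({p} : Set R))) K w (n + 1)))
            = Submodule.Quotient.mk a)
      -- exactness
      ∧ (∀ n, Function.Exact ⇑(δ n) ⇑(μ n))
      ∧ (∀ n, Function.Exact ⇑(μ n) ⇑(ρ n))
      ∧ (∀ n, Function.Exact ⇑(ρ (n + 1)) ⇑(δ n))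
      -- the generalized Bockstein `β = ρ ∘ δ` satisfies `β ∘ β = 0`
      ∧ (∀ n, ((ρ n).comp (δ n)).comp (((ρ (n + 1)).comp (δ (n + 1)))) = 0) := by
  classical
  -- the connecting map computed on quotient classes
  have hdelta_mk : ∀ n (z : ↥(wZ (Ideal.Quotient.mk (Ideal.span ({p} : Set R))) K w (n + 1))),
      deltaHom hp hw0 hdvd n (Submodule.Quotient.mk z) = deltaFun hp hw0 hdvd n z :=
    fun n z => rfl
  -- exactness at `Hₙ(K,w;R)` between `δ` and `μ`
  have hex1 : ∀ n, Function.Exact ⇑(deltaHom hp hw0 hdvd n) ⇑(muHom p K w n) := by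
    intro n y
    obtain ⟨a, rfl⟩ := Submodule.Quotient.mk_surjective _ y
    constructor
    · intro h0
      rw [muHom_mk, Submodule.Quotient.mk_eq_zero, Submodule.mem_comap] at h0
      obtain ⟨c, hc⟩ := h0
      have hcyc : wbnd (Ideal.Quotient.mk (Ideal.span ({p} : Set R))) K w n
          (redc p K (n + 1) c) = 0 := by
        rw [← redc_wbnd p w n c, hc]
        exact redc_p_smul n a.1
      refine ⟨Submodule.Quotient.mk ⟨redc p K (n + 1) c, LinearMap.mem_ker.2 hcyc⟩, ?_⟩
      rw [hdelta_mk]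
      exact deltaFun_spec hp hw0 hdvd n _ c a rfl hc
    · rintro ⟨x, hx⟩
      rw [← hx]
      obtain ⟨z, rfl⟩ := Submodule.Quotient.mk_surjective _ x
      have spec := (delta_exists hp hw0 hdvd n z).choose_spec
      rw [hdelta_mk, deltaFun, muHom_mk, Submodule.Quotient.mk_eq_zero]
      exact Submodule.mem_comap.2 ⟨(delta_exists hp hw0 hdvd n z).choose.1, spec.2⟩
  -- exactness at `Hₙ(K,w;R)` between `μ` and `ρ`
  have hex2 : ∀ n, Function.Exact ⇑(muHom p K w n) ⇑(rhoHom p K w n) := by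
    intro n y
    obtain ⟨z, rfl⟩ := Submodule.Quotient.mk_surjective _ y
    constructor
    · intro h0
      rw [rhoHom_mk, Submodule.Quotient.mk_eq_zero, Submodule.mem_comap] at h0
      obtain ⟨u, hu⟩ := h0
      have hu' : wbnd (Ideal.Quotient.mk (Ideal.span ({p} : Set R))) K w n u =
          redc p K n z.1 := hu
      obtain ⟨c, hcm⟩ := redc_surjective p K (n + 1) u
      have h1 : redc p K n (z.1 - wbnd (RingHom.id R) K w n c) = 0 := by
        rw [redc_sub, redc_wbnd p w n c, hcm, hu', sub_self]
      have hd : p • pdiv hp K n (z.1 - wbnd (RingHom.id R) K w n c) =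
          z.1 - wbnd (RingHom.id R) K w n c := pdiv_spec hp h1
      have hdz : pdiv hp K n (z.1 - wbnd (RingHom.id R) K w n c) ∈
          wZ (RingHom.id R) K w n := mem_wZ_of_p_smul_mem hw0 hdvd hp z.2 hd
      refine ⟨Submodule.Quotient.mk ⟨_, hdz⟩, ?_⟩
      rw [muHom_mk, Submodule.Quotient.eq, Submodule.mem_comap]
      refine ⟨-c, ?_⟩
      show wbnd (RingHom.id R) K w n (-c) = _
      rw [map_neg]
      show -(wbnd (RingHom.id R) K w n c) =
        p • pdiv hp K n (z.1 - wbnd (RingHom.id R) K w n c) - z.1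
      rw [hd]
      abel
    · rintro ⟨x, hx⟩
      rw [← hx]
      obtain ⟨a, rfl⟩ := Submodule.Quotient.mk_surjective _ x
      rw [muHom_mk, rhoHom_mk, Submodule.Quotient.mk_eq_zero]
      refine Submodule.mem_comap.2 ?_
      show redc p K n ((p • a : ↥(wZ (RingHom.id R) K w n)).1) ∈ _
      rw [show ((p • a : ↥(wZ (RingHom.id R) K w n)).1) = p • a.1 from rfl, redc_p_smul]
      exact zero_mem _
  -- exactness at `Hₙ₊₁(K,w;R/p)` between `ρ` and `δ`
  have hex3 : ∀ n, Function.Exact ⇑(rhoHom p K w (n + 1)) ⇑(deltaHom hp hw0 hdvd n) := by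
    intro n y
    obtain ⟨z, rfl⟩ := Submodule.Quotient.mk_surjective _ y
    constructor
    · intro h0
      have spec := (delta_exists hp hw0 hdvd n z).choose_spec
      rw [hdelta_mk, deltaFun, Submodule.Quotient.mk_eq_zero, Submodule.mem_comap] at h0
      obtain ⟨e, he⟩ := h0
      have hc2 : wbnd (RingHom.id R) K w n
          ((delta_exists hp hw0 hdvd n z).choose.1 - p • e) = 0 := by
        rw [map_sub, map_smul, he, spec.2, Submodule.subtype_apply, sub_self]
      refine ⟨Submodule.Quotient.mk ⟨_, LinearMap.mem_ker.2 hc2⟩, ?_⟩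
      rw [rhoHom_mk]
      refine congrArg Submodule.Quotient.mk (Subtype.ext ?_)
      show redc p K (n + 1) ((delta_exists hp hw0 hdvd n z).choose.1 - p • e) = z.1
      rw [redc_sub, redc_p_smul, sub_zero, spec.1]
    · rintro ⟨x, hx⟩
      rw [← hx]
      obtain ⟨zr, rfl⟩ := Submodule.Quotient.mk_surjective _ x
      rw [rhoHom_mk, hdelta_mk]
      rw [deltaFun_spec hp hw0 hdvd n _ zr.1 0 rfl
        (by rw [LinearMap.mem_ker.1 zr.2]; simp)]
      exact Submodule.Quotient.mk_zero _
  refine ⟨muHom p K w, rhoHom p K w, deltaHom hp hw0 hdvd,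
    fun n z => muHom_mk n z,
    fun n z => ⟨redc_mem_wZ p z.2, rhoHom_mk n z⟩,
    fun n c hc a h => deltaFun_spec hp hw0 hdvd n ⟨_, hc⟩ c a rfl h,
    hex1, hex2, hex3, ?_⟩
  intro n
  ext x
  simp only [AddMonoidHom.comp_apply, AddMonoidHom.zero_apply]
  have h := (hex3 n (rhoHom p K w (n + 1) (deltaHom hp hw0 hdvd (n + 1) x))).mpr
    ⟨deltaHom hp hw0 hdvd (n + 1) x, rfl⟩
  rw [h, map_zero]
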